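/- Let F be a module over B = ℂ⟦b⟧ with a-action satisfying ab - ba = b², and suppose F = B[a]·x is generated by x with F/F_r ≅ E_α for a normal corank-1 submodule F_r, where x maps to the standard generator e_α. Then y := (a - αb)x generates F_r as a B[a]-module. -/

import Mathlib

/-- Let `F` be an (a,b)-module generated over `B[a]` by `x` (a fresco), with a
surjective `B`-linear map `π : F → E_α` (modeled on `B = ℂ⟦b⟧` with a-action
`a·S = α·b·S + b²·S'`) sending `x` to the generator `e_α = 1` and intertwining
the a-actions, so that `F_r = ker π` is a normal corank-1 submodule.
Then `y := (a - αb)x` generates `F_r` as a `B[a]`-module: `y ∈ F_r` and `F_r`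
is contained in every `a`-stable submodule containing `y`. -/
theorem stmt15 (E : Type*) [AddCommGroup E] [Module (PowerSeries ℂ) E]
    (a : E →+ E)
    (ha : ∀ (S : PowerSeries ℂ) (x : E),
      a (S • x) = S • a x + (PowerSeries.X ^ 2 * PowerSeries.derivative ℂ S) • x)
    (α : ℂ) (x : E)
    (hgen : ∀ G : Submodule (PowerSeries ℂ) E,
      (∀ v ∈ G, a v ∈ G) → x ∈ G → ∀ v : E, v ∈ G)
    (π : E →ₗ[PowerSeries ℂ] PowerSeries ℂ)
    (hπsurj : Function.Surjective π) (hπx : π x = 1)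
    (hπa : ∀ v : E, π (a v) =
      PowerSeries.C α * (PowerSeries.X * π v) +
        PowerSeries.X ^ 2 * PowerSeries.derivative ℂ (π v)) :
    (a x - (PowerSeries.C α * PowerSeries.X) • x) ∈ LinearMap.ker π ∧
    ∀ G : Submodule (PowerSeries ℂ) E, (∀ v ∈ G, a v ∈ G) →
      (a x - (PowerSeries.C α * PowerSeries.X) • x) ∈ G → LinearMap.ker π ≤ G := by
  constructor
  · rw [LinearMap.mem_ker, map_sub, map_smul, hπa, hπx]
    simp [smul_eq_mul]
  · intro G hGa hyG v hv
    set f : E →ₗ[PowerSeries ℂ] E :=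
      LinearMap.id - (LinearMap.toSpanSingleton (PowerSeries ℂ) E x).comp π with hf
    have allmem : ∀ w, w ∈ Submodule.comap f G := by
      intro w
      refine hgen _ ?_ ?_ w
      · intro u hu
        simp only [Submodule.mem_comap] at hu ⊢
        have hu2 : u = f u + π u • x := by
          simp [hf, LinearMap.sub_apply, LinearMap.toSpanSingleton_apply]
        have hau : a u = a (f u) +
            (π u • a x + (PowerSeries.X ^ 2 * PowerSeries.derivative ℂ (π u)) • x) := by
          conv_lhs => rw [hu2]
          rw [map_add, ha]
        have hfa : f (a u) = a (f u) +
            π u • (a x - (PowerSeries.C α * PowerSeries.X) • x) := by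
          have h1 : f (a u) = a u - π (a u) • x := by
            simp [hf, LinearMap.toSpanSingleton_apply]
          rw [h1, hπa u, hau]
          have hc : π u * (PowerSeries.C α * PowerSeries.X) =
              PowerSeries.C α * (PowerSeries.X * π u) := by ring
          rw [add_smul, smul_sub, smul_smul, hc]
          abel
        rw [hfa]
        exact G.add_mem (hGa _ hu) (G.smul_mem _ hyG)
      · simp [Submodule.mem_comap, hf, LinearMap.toSpanSingleton_apply, hπx]
    have hv' := allmem v
    simp only [Submodule.mem_comap, hf, LinearMap.sub_apply, LinearMap.id_apply,
      LinearMap.comp_apply, LinearMap.toSpanSingleton_apply,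
      LinearMap.mem_ker.mp hv, zero_smul, sub_zero] at hv'
    exact hv'
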